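/- Let G be a group in which for every pair of elements g, h there exists s ∈ ℕ with h^{p^s} ∈ C_G(g) (p a fixed prime), and suppose G is locally nilpotent. Then every commutator (g,h) is a p-element, and hence the commutator subgroup G' is a p-group. -/

import Mathlib

open MonoidAlgebra

/-- The augmentation map of a group algebra. -/
noncomputable def aug (F G : Type*) [CommSemiring F] [Group G] :
    MonoidAlgebra F G →ₐ[F] F := MonoidAlgebra.lift (R := F) (A := F) (M := G) 1

/-- The classical involution `∑ a_g g ↦ ∑ a_g g⁻¹` of a group algebra. -/
noncomputable def classicalStar {F G : Type*} [CommSemiring F] [Group G]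
    (x : MonoidAlgebra F G) : MonoidAlgebra F G := MonoidAlgebra.mapDomain (·⁻¹) x

/-- A unit of the group algebra is unitary if it is normalized (augmentation one)
and its classical star is its inverse. -/
def IsUnitaryUnit {F G : Type*} [CommSemiring F] [Group G]
    (u : (MonoidAlgebra F G)ˣ) : Prop :=
  aug F G (u : MonoidAlgebra F G) = 1 ∧
    classicalStar (u : MonoidAlgebra F G) = ((u⁻¹ : (MonoidAlgebra F G)ˣ) : MonoidAlgebra F G)

/-- A group is locally nilpotent if every finitely generated subgroup is nilpotent. -/
def IsLocallyNilpotent (G : Type*) [Group G] : Prop :=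
  ∀ H : Subgroup G, H.FG → Group.IsNilpotent H

/-- `V_*(FG)` is locally nilpotent: every finitely generated subgroup of the unit
group consisting of unitary units is nilpotent. -/
def VstarLocallyNilpotent (F G : Type*) [CommSemiring F] [Group G] : Prop :=
  ∀ S : Subgroup (MonoidAlgebra F G)ˣ, (∀ u ∈ S, IsUnitaryUnit u) → S.FG →
    Group.IsNilpotent S

/-- `V(FG)` is locally nilpotent: every finitely generated subgroup of the unit
group consisting of normalized units is nilpotent. -/
def VLocallyNilpotent (F G : Type*) [CommSemiring F] [Group G] : Prop :=
  ∀ S : Subgroup (MonoidAlgebra F G)ˣ,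
    (∀ u ∈ S, aug F G (u : MonoidAlgebra F G) = 1) → S.FG → Group.IsNilpotent S

/-- `ĉ = 1 + c + ⋯ + c^(p-1)` in the group algebra. -/
noncomputable def chat (F : Type*) {G : Type*} [CommSemiring F] [Group G]
    (c : G) (p : ℕ) : MonoidAlgebra F G :=
  ∑ i ∈ Finset.range p, MonoidAlgebra.of F G c ^ i

/-- The commutator `(x,y) = x⁻¹y⁻¹xy`. -/
def gcomm {M : Type*} [Group M] (x y : M) : M := x⁻¹ * y⁻¹ * x * y

/-- Left-normed iterated commutator `(x, y, n)`. -/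
def itComm {M : Type*} [Group M] (x y : M) : ℕ → M
  | 0 => x
  | n + 1 => gcomm (itComm x y n) y


open scoped commutatorElement

namespace Stmt8Aux

open Pointwise

universe u

/-- `γ_{n+1} = ⁅γ_n, ⊤⁆` (definitional). -/
lemma lcs_succ' {K : Type u} [Group K] (n : ℕ) :
    (⊤ : Subgroup K).lowerCentralSeries (n + 1) = ⁅(⊤ : Subgroup K).lowerCentralSeries n, ⊤⁆ := rfl

/-- If `⁅x,h⁆` commutes with `h`, then `⁅x, h^k⁆ = ⁅x,h⁆^k`. -/
lemma comm_pow_right {K : Type u} [Group K] (x h : K) (hc : Commute ⁅x, h⁆ h) :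
    ∀ k : ℕ, ⁅x, h ^ k⁆ = ⁅x, h⁆ ^ k := by
  intro k
  induction k with
  | zero => simp
  | succ k ih =>
    have key : ∀ a : K, ⁅x, h * a⁆ = ⁅x, h⁆ * (h * ⁅x, a⁆ * h⁻¹) := by
      intro a; simp only [commutatorElement_def]; group
    have hconj : h * ⁅x, h⁆ ^ k * h⁻¹ = ⁅x, h⁆ ^ k := by
      rw [(hc.pow_left k).symm.eq, mul_inv_cancel_right]
    calc ⁅x, h ^ (k + 1)⁆ = ⁅x, h * h ^ k⁆ := by rw [← pow_succ']
      _ = ⁅x, h⁆ * (h * ⁅x, h ^ k⁆ * h⁻¹) := key _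
      _ = ⁅x, h⁆ * (h * ⁅x, h⁆ ^ k * h⁻¹) := by rw [ih]
      _ = ⁅x, h⁆ * ⁅x, h⁆ ^ k := by rw [hconj]
      _ = ⁅x, h⁆ ^ (k + 1) := by rw [← pow_succ']

/-- If `⁅u,v⁆` commutes with `u`, then `⁅u^n, v⁆ = ⁅u,v⁆^n`. -/
lemma comm_pow_left {K : Type u} [Group K] (u v : K) (hc : Commute ⁅u, v⁆ u) :
    ∀ n : ℕ, ⁅u ^ n, v⁆ = ⁅u, v⁆ ^ n := by
  intro n
  induction n with
  | zero => simp
  | succ n ih =>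
    have key : ∀ a : K, ⁅u * a, v⁆ = u * ⁅a, v⁆ * u⁻¹ * ⁅u, v⁆ := by
      intro a; simp only [commutatorElement_def]; group
    have hconj : u * ⁅u, v⁆ ^ n * u⁻¹ = ⁅u, v⁆ ^ n := by
      rw [(hc.pow_left n).symm.eq, mul_inv_cancel_right]
    calc ⁅u ^ (n + 1), v⁆ = ⁅u * u ^ n, v⁆ := by rw [← pow_succ']
      _ = u * ⁅u ^ n, v⁆ * u⁻¹ * ⁅u, v⁆ := key _
      _ = u * ⁅u, v⁆ ^ n * u⁻¹ * ⁅u, v⁆ := by rw [ih]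
      _ = ⁅u, v⁆ ^ n * ⁅u, v⁆ := by rw [hconj]
      _ = ⁅u, v⁆ ^ (n + 1) := by rw [← pow_succ]

/-- The closure of a set of central `p`-torsion elements is `p`-torsion. -/
lemma closure_central_ptorsion {K : Type u} [Group K] (p : ℕ) (S : Set K)
    (hcen : ∀ y ∈ S, ∀ w : K, Commute y w)
    (htor : ∀ y ∈ S, ∃ m : ℕ, y ^ p ^ m = 1) :
    ∀ x ∈ Subgroup.closure S, ∃ m : ℕ, x ^ p ^ m = 1 := by
  intro x hx
  have main : (∀ w : K, Commute x w) ∧ ∃ m : ℕ, x ^ p ^ m = 1 := by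
    induction hx using Subgroup.closure_induction with
    | mem y hy => exact ⟨hcen y hy, htor y hy⟩
    | one => exact ⟨fun w => Commute.one_left w, ⟨0, by simp⟩⟩
    | mul a b ha hb iha ihb =>
      obtain ⟨m₁, hm₁⟩ := iha.2
      obtain ⟨m₂, hm₂⟩ := ihb.2
      refine ⟨fun w => (iha.1 w).mul_left (ihb.1 w), ⟨m₁ + m₂, ?_⟩⟩
      rw [(iha.1 b).mul_pow, pow_add, pow_mul, hm₁, one_pow, one_mul,
        mul_comm (p ^ m₁), pow_mul, hm₂, one_pow]
    | inv a ha iha =>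
      obtain ⟨m, hm⟩ := iha.2
      exact ⟨fun w => (iha.1 w).inv_left, ⟨m, by rw [inv_pow, hm, inv_one]⟩⟩
  exact main.2

/-- Lower central series maps onto the lower central series of a quotient. -/
lemma lcs_map_surj {K : Type u} {Q : Type u} [Group K] [Group Q] (f : K →* Q)
    (hf : Function.Surjective f) : ∀ n : ℕ,
    ((⊤ : Subgroup K).lowerCentralSeries n).map f = (⊤ : Subgroup Q).lowerCentralSeries n := by
  intro n
  induction n with
  | zero =>
    rw [Subgroup.lowerCentralSeries_zero, Subgroup.lowerCentralSeries_zero]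
    exact Subgroup.map_top_of_surjective f hf
  | succ n ih =>
    rw [lcs_succ', lcs_succ', Subgroup.map_commutator, ih,
      Subgroup.map_top_of_surjective f hf]

/-- In a nilpotent group generated by `p`-torsion elements, every element is
`p`-torsion. -/
lemma pt (p : ℕ) : ∀ c : ℕ, ∀ {K : Type u} [Group K],
    (⊤ : Subgroup K).lowerCentralSeries c = ⊥ → ∀ S : Set K, Subgroup.closure S = ⊤ →
    (∀ y ∈ S, ∃ m : ℕ, y ^ p ^ m = 1) → ∀ x : K, ∃ m : ℕ, x ^ p ^ m = 1 := by
  intro c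
  induction c with
  | zero =>
    intro K _ hbot S _ _ x
    have hx : x ∈ (⊤ : Subgroup K).lowerCentralSeries 0 := by
      rw [Subgroup.lowerCentralSeries_zero]; exact Subgroup.mem_top x
    rw [hbot] at hx
    exact ⟨0, by simp [Subgroup.mem_bot.mp hx]⟩
  | succ c ih =>
    intro K _ hbot S hgen htor x
    have hLcentral : ∀ z ∈ (⊤ : Subgroup K).lowerCentralSeries c, ∀ w : K, Commute z w := by
      intro z hz w
      have hm : ⁅z, w⁆ ∈ (⊤ : Subgroup K).lowerCentralSeries (c + 1) := by
        rw [lcs_succ']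
        exact Subgroup.commutator_mem_commutator hz (Subgroup.mem_top w)
      rw [hbot] at hm
      exact commutatorElement_eq_one_iff_commute.mp (Subgroup.mem_bot.mp hm)
    set L := (⊤ : Subgroup K).lowerCentralSeries c with hL
    let π : K →* K ⧸ L := QuotientGroup.mk' L
    have hπs : Function.Surjective π := QuotientGroup.mk'_surjective L
    have hq : (⊤ : Subgroup (K ⧸ L)).lowerCentralSeries c = ⊥ := by
      rw [← lcs_map_surj π hπs c, ← hL, Subgroup.map_eq_bot_iff,
        QuotientGroup.ker_mk']
    have hqgen : Subgroup.closure (π '' S) = ⊤ := by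
      rw [← MonoidHom.map_closure, hgen, Subgroup.map_top_of_surjective _ hπs]
    have hqtor : ∀ y ∈ π '' S, ∃ m : ℕ, y ^ p ^ m = 1 := by
      rintro _ ⟨y, hy, rfl⟩
      obtain ⟨m, hm⟩ := htor y hy
      exact ⟨m, by rw [← map_pow, hm, map_one]⟩
    have hKq : ∀ q : K ⧸ L, ∃ m : ℕ, q ^ p ^ m = 1 := ih hq _ hqgen hqtor
    -- `L` is `p`-torsion
    have hLtor : ∀ z ∈ L, ∃ m : ℕ, z ^ p ^ m = 1 := by
      cases c with
      | zero =>
        intro z hz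
        refine closure_central_ptorsion p S ?_ htor z ?_
        · intro y _ w
          exact hLcentral y (Subgroup.mem_top y) w
        · rw [hgen]; exact Subgroup.mem_top z
      | succ c' =>
        intro z hz
        have hz' : z ∈ Subgroup.closure {g : K | ∃ g₁ ∈ (⊤ : Subgroup K).lowerCentralSeries c',
            ∃ g₂ ∈ (⊤ : Subgroup K), ⁅g₁, g₂⁆ = g} := by
          rw [← Subgroup.commutator_def, ← lcs_succ']
          exact hz
        refine closure_central_ptorsion p _ ?_ ?_ z hz'
        · rintro y ⟨u, hu, v, _, rfl⟩ w
          refine hLcentral _ ?_ w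
          rw [hL, lcs_succ']
          exact Subgroup.commutator_mem_commutator hu (Subgroup.mem_top v)
        · rintro y ⟨u, hu, v, _, rfl⟩
          obtain ⟨m, hm⟩ := hKq (π u)
          have humem : u ^ p ^ m ∈ L := by
            have h4 : u ^ p ^ m ∈ π.ker := MonoidHom.mem_ker.mpr (by rw [map_pow]; exact hm)
            rwa [QuotientGroup.ker_mk'] at h4
          have hcomm1 : Commute ⁅u, v⁆ u := by
            refine hLcentral _ ?_ u
            rw [hL, lcs_succ']
            exact Subgroup.commutator_mem_commutator hu (Subgroup.mem_top v)
          refine ⟨m, ?_⟩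
          rw [← comm_pow_left u v hcomm1]
          exact commutatorElement_eq_one_iff_commute.mpr (hLcentral _ humem v)
    obtain ⟨m, hm⟩ := hKq (π x)
    have hxm : x ^ p ^ m ∈ L := by
      have h4 : x ^ p ^ m ∈ π.ker := MonoidHom.mem_ker.mpr (by rw [map_pow]; exact hm)
      rwa [QuotientGroup.ker_mk'] at h4
    obtain ⟨r, hr⟩ := hLtor _ hxm
    exact ⟨m + r, by rw [pow_add, pow_mul, hr]⟩

/-- Subgroup-closure version of `pt` (no generation hypothesis). -/
lemma pt' (p c : ℕ) {K : Type u} [Group K] (hbot : (⊤ : Subgroup K).lowerCentralSeries c = ⊥)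
    (S : Set K) (htor : ∀ y ∈ S, ∃ m : ℕ, y ^ p ^ m = 1) :
    ∀ x ∈ Subgroup.closure S, ∃ m : ℕ, x ^ p ^ m = 1 := by
  intro x hx
  set K₀ := Subgroup.closure S with hK₀
  have h1 : (⊤ : Subgroup ↥K₀).lowerCentralSeries c = ⊥ := by
    have h2 := Subgroup.lowerCentralSeries_map_subtype_le K₀ c
    rw [hbot, le_bot_iff, Subgroup.map_eq_bot_iff, Subgroup.ker_subtype,
      le_bot_iff] at h2
    exact h2
  have hgen : Subgroup.closure (((↑) : K₀ → K) ⁻¹' S) = ⊤ :=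
    Subgroup.closure_closure_coe_preimage
  have htor' : ∀ y ∈ (((↑) : K₀ → K) ⁻¹' S), ∃ m : ℕ, y ^ p ^ m = 1 := by
    intro y hy
    obtain ⟨m, hm⟩ := htor (↑y) hy
    exact ⟨m, Subtype.ext (by simpa using hm)⟩
  obtain ⟨m, hm⟩ := pt p c h1 _ hgen htor' ⟨x, hx⟩
  exact ⟨m, by simpa using congrArg Subtype.val hm⟩

/-- Key nilpotent lemma: if `x` commutes with `h ^ p ^ s` in a nilpotent group,
then `⁅x, h⁆` is a `p`-element. -/
lemma ml (p : ℕ) : ∀ c : ℕ, ∀ {K : Type u} [Group K],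
    (⊤ : Subgroup K).lowerCentralSeries c = ⊥ → ∀ x h : K, ∀ s : ℕ, Commute x (h ^ p ^ s) →
    ∃ t : ℕ, ⁅x, h⁆ ^ p ^ t = 1 := by
  intro c
  induction c with
  | zero =>
    intro K _ hbot x h s _
    have hx : x ∈ (⊤ : Subgroup K).lowerCentralSeries 0 := by
      rw [Subgroup.lowerCentralSeries_zero]; exact Subgroup.mem_top x
    rw [hbot] at hx
    exact ⟨0, by simp [Subgroup.mem_bot.mp hx]⟩
  | succ c ih =>
    intro K _ hbot x h s hcomm
    -- Step A : `⁅x,h⁆` commutes with `h ^ p ^ s`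
    have hA : Commute ⁅x, h⁆ (h ^ p ^ s) := by
      have ch : Commute (h ^ p ^ s) h := (Commute.refl h).pow_left _
      have cx : Commute (h ^ p ^ s) x := hcomm.symm
      have : Commute (h ^ p ^ s) (x * h * x⁻¹ * h⁻¹) :=
        ((cx.mul_right ch).mul_right cx.inv_right).mul_right ch.inv_right
      rw [commutatorElement_def]
      exact this.symm
    cases c with
    | zero =>
      refine ⟨0, ?_⟩
      have hmem : ⁅x, h⁆ ∈ (⊤ : Subgroup K).lowerCentralSeries 1 := by
        rw [lcs_succ']
        exact Subgroup.commutator_mem_commutator (Subgroup.mem_top x) (Subgroup.mem_top h)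
      rw [hbot] at hmem
      simpa using Subgroup.mem_bot.mp hmem
    | succ c' =>
      set M : Subgroup K := commutator K ⊔ Subgroup.zpowers h with hM
      -- commutators of elements of M lie in γ₂(K)
      have hB1 : ∀ a ∈ M, ∀ b ∈ M, ⁅a, b⁆ ∈ (⊤ : Subgroup K).lowerCentralSeries 2 := by
        set N := (⊤ : Subgroup K).lowerCentralSeries 2 with hN
        let π : K →* K ⧸ N := QuotientGroup.mk' N
        have hcen : ∀ u : K, u ∈ commutator K → ∀ q : K ⧸ N, Commute (π u) q := by
          intro u hu q
          obtain ⟨w, rfl⟩ := QuotientGroup.mk'_surjective N q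
          have hm : ⁅u, w⁆ ∈ N := by
            rw [hN, lcs_succ']
            refine Subgroup.commutator_mem_commutator ?_ (Subgroup.mem_top w)
            rwa [Subgroup.top_lowerCentralSeries_one]
          have hker : ⁅u, w⁆ ∈ π.ker := by rw [QuotientGroup.ker_mk']; exact hm
          have h1 : ⁅π u, π w⁆ = 1 := by
            rw [← map_commutatorElement]
            exact MonoidHom.mem_ker.mp hker
          exact commutatorElement_eq_one_iff_commute.mp h1
        have hdec : ∀ y ∈ M, ∃ u ∈ commutator K, ∃ i : ℤ, y = u * h ^ i := by
          intro y hy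
          have hy' : y ∈ (commutator K : Set K) * (Subgroup.zpowers h : Set K) := by
            rw [← Subgroup.normal_mul]
            exact hy
          obtain ⟨u, hu, z, hz, rfl⟩ := hy'
          obtain ⟨i, hi⟩ := Subgroup.mem_zpowers_iff.mp hz
          exact ⟨u, hu, i, by rw [hi]⟩
        intro a ha b hb
        obtain ⟨u₁, hu₁, i, rfl⟩ := hdec a ha
        obtain ⟨u₂, hu₂, j, rfl⟩ := hdec b hb
        have hc : Commute (π (u₁ * h ^ i)) (π (u₂ * h ^ j)) := by
          rw [map_mul, map_mul, map_zpow, map_zpow]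
          exact Commute.mul_left (hcen u₁ hu₁ _)
            (Commute.mul_right ((hcen u₂ hu₂ _).symm) (Commute.zpow_zpow_self (π h) i j))
        have h1 := commutatorElement_eq_one_iff_commute.mpr hc
        rw [← map_commutatorElement] at h1
        have h2 : ⁅u₁ * h ^ i, u₂ * h ^ j⁆ ∈ π.ker := MonoidHom.mem_ker.mpr h1
        rwa [QuotientGroup.ker_mk'] at h2
      -- the lower central series of `M` drops
      have hMl : ∀ j : ℕ, Subgroup.map M.subtype ((⊤ : Subgroup ↥M).lowerCentralSeries (j + 1)) ≤
          (⊤ : Subgroup K).lowerCentralSeries (j + 2) := by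
        intro j
        induction j with
        | zero =>
          rw [lcs_succ', Subgroup.lowerCentralSeries_zero, Subgroup.map_commutator,
            ← MonoidHom.range_eq_map, Subgroup.range_subtype]
          exact Subgroup.commutator_le.mpr hB1
        | succ j ihj =>
          rw [lcs_succ', Subgroup.map_commutator]
          calc ⁅Subgroup.map M.subtype ((⊤ : Subgroup ↥M).lowerCentralSeries (j + 1)),
                Subgroup.map M.subtype ⊤⁆
              ≤ ⁅(⊤ : Subgroup K).lowerCentralSeries (j + 2), ⊤⁆ :=
                Subgroup.commutator_mono ihj le_top
            _ = (⊤ : Subgroup K).lowerCentralSeries (j + 3) := (lcs_succ' (j + 2)).symm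
      have hMbot : (⊤ : Subgroup ↥M).lowerCentralSeries (c' + 1) = ⊥ := by
        have h2 := hMl c'
        have hbot' : (⊤ : Subgroup K).lowerCentralSeries (c' + 2) = ⊥ := hbot
        rw [hbot', le_bot_iff, Subgroup.map_eq_bot_iff, Subgroup.ker_subtype,
          le_bot_iff] at h2
        exact h2
      have hdM : ⁅x, h⁆ ∈ M :=
        Subgroup.mem_sup_left
          (Subgroup.commutator_mem_commutator (Subgroup.mem_top x) (Subgroup.mem_top h))
      have hhM : h ∈ M := Subgroup.mem_sup_right (Subgroup.mem_zpowers h)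
      have hcomm' : Commute (⟨⁅x, h⁆, hdM⟩ : ↥M) ((⟨h, hhM⟩ : ↥M) ^ p ^ s) := by
        have : ((⟨⁅x, h⁆, hdM⟩ : ↥M) * (⟨h, hhM⟩ : ↥M) ^ p ^ s : ↥M) =
            ((⟨h, hhM⟩ : ↥M) ^ p ^ s * (⟨⁅x, h⁆, hdM⟩ : ↥M) : ↥M) := by
          apply Subtype.ext
          push_cast
          exact hA
        exact this
      obtain ⟨t, ht⟩ := ih hMbot _ _ s hcomm'
      have ht' : ⁅⁅x, h⁆, h⁆ ^ p ^ t = 1 := by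
        have h3 := congrArg (M.subtype) ht
        rw [map_pow, map_commutatorElement, map_one] at h3
        simpa using h3
      -- Step D
      set N' := Subgroup.normalClosure {⁅⁅x, h⁆, h⁆} with hN'
      haveI : N'.Normal := Subgroup.normalClosure_normal
      have hNtor : ∀ z ∈ N', ∃ m : ℕ, z ^ p ^ m = 1 := by
        intro z hz
        refine pt' p (c' + 1 + 1) hbot (Group.conjugatesOfSet {⁅⁅x, h⁆, h⁆}) ?_ z hz
        intro y hy
        obtain ⟨a, ha, hconj⟩ := Group.mem_conjugatesOfSet_iff.mp hy
        rw [Set.mem_singleton_iff] at ha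
        subst ha
        obtain ⟨w, hw⟩ := isConj_iff.mp hconj
        refine ⟨t, ?_⟩
        have : y = (MulAut.conj w) ⁅⁅x, h⁆, h⁆ := by rw [MulAut.conj_apply, hw]
        rw [this, ← map_pow, ht', map_one]
      let π' : K →* K ⧸ N' := QuotientGroup.mk' N'
      have hDcomm : Commute ⁅π' x, π' h⁆ (π' h) := by
        have hmem : ⁅⁅x, h⁆, h⁆ ∈ N' := Subgroup.subset_normalClosure (Set.mem_singleton _)
        have h1 : π' ⁅⁅x, h⁆, h⁆ = 1 :=
          MonoidHom.mem_ker.mp (by rw [QuotientGroup.ker_mk']; exact hmem)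
        apply commutatorElement_eq_one_iff_commute.mp
        rw [← map_commutatorElement, ← map_commutatorElement]
        exact h1
      have hxq : ⁅π' x, π' h⁆ ^ p ^ s = 1 := by
        rw [← comm_pow_right (π' x) (π' h) hDcomm (p ^ s), ← map_pow,
          commutatorElement_eq_one_iff_commute]
        exact hcomm.map π'
      have hdN : ⁅x, h⁆ ^ p ^ s ∈ N' := by
        have h4 : ⁅x, h⁆ ^ p ^ s ∈ π'.ker :=
          MonoidHom.mem_ker.mpr (by rw [map_pow, map_commutatorElement]; exact hxq)
        rwa [QuotientGroup.ker_mk'] at h4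
      obtain ⟨r, hr⟩ := hNtor _ hdN
      exact ⟨s + r, by rw [pow_add, pow_mul, hr]⟩

end Stmt8Aux

namespace Stmt8Aux

/-- Every commutator `⁅g,h⁆` is a `p`-element. -/
lemma key {G : Type u} [Group G] (p : ℕ) (hloc : IsLocallyNilpotent G)
    (hcent : ∀ g h : G, ∃ s : ℕ, h ^ p ^ s ∈ Subgroup.centralizer {g}) (g h : G) :
    ∃ t : ℕ, ⁅g, h⁆ ^ p ^ t = 1 := by
  set H := Subgroup.closure ({g, h} : Set G) with hH
  have hFG : H.FG := (Subgroup.fg_iff H).mpr ⟨{g, h}, hH.symm, (Set.finite_singleton h).insert g⟩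
  have hnil : Group.IsNilpotent ↥H := hloc H hFG
  obtain ⟨c, hc⟩ := Subgroup.nilpotent_iff_lowerCentralSeries.mp hnil
  have hgH : g ∈ H := Subgroup.subset_closure (by simp)
  have hhH : h ∈ H := Subgroup.subset_closure (by simp)
  obtain ⟨s, hs⟩ := hcent g h
  have hs' : Commute g (h ^ p ^ s) :=
    Subgroup.mem_centralizer_iff.mp hs g (Set.mem_singleton g)
  have hcomm : Commute (⟨g, hgH⟩ : ↥H) ((⟨h, hhH⟩ : ↥H) ^ p ^ s) := by
    have : ((⟨g, hgH⟩ : ↥H) * (⟨h, hhH⟩ : ↥H) ^ p ^ s : ↥H) =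
        ((⟨h, hhH⟩ : ↥H) ^ p ^ s * (⟨g, hgH⟩ : ↥H) : ↥H) := by
      apply Subtype.ext
      push_cast
      exact hs'
    exact this
  obtain ⟨t, ht⟩ := ml p c hc _ _ s hcomm
  refine ⟨t, ?_⟩
  have h3 := congrArg H.subtype ht
  rw [map_pow, map_commutatorElement, map_one] at h3
  simpa using h3

end Stmt8Aux

theorem stmt8 (G : Type*) [Group G] (p : ℕ) [Fact p.Prime]
    (hloc : IsLocallyNilpotent G)
    (hcent : ∀ g h : G, ∃ s : ℕ, h ^ p ^ s ∈ Subgroup.centralizer {g}) :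
    (∀ g h : G, ∃ n : ℕ, gcomm g h ^ p ^ n = 1) ∧ IsPGroup p (commutator G) := by
  constructor
  · intro g h
    obtain ⟨t, ht⟩ := Stmt8Aux.key p hloc hcent g⁻¹ h⁻¹
    refine ⟨t, ?_⟩
    have : gcomm g h = ⁅g⁻¹, h⁻¹⁆ := by
      simp [gcomm, commutatorElement_def, mul_assoc]
    rw [this]
    exact ht
  · intro q
    have hx : (q : G) ∈ Subgroup.closure (commutatorSet G) := by
      rw [← commutator_eq_closure]; exact q.2
    have hx' : (q : G) ∈ Submonoid.closure (commutatorSet G ∪ (commutatorSet G)⁻¹) := by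
      rw [← Subgroup.closure_toSubmonoid]; exact hx
    obtain ⟨l, hl, hprod⟩ := Submonoid.exists_list_of_mem_closure hx'
    have htorl : ∀ y ∈ l, ∃ m : ℕ, y ^ p ^ m = 1 := by
      intro y hy
      rcases hl y hy with hy1 | hy2
      · obtain ⟨g, h, rfl⟩ := hy1
        exact Stmt8Aux.key p hloc hcent g h
      · rw [Set.mem_inv] at hy2
        obtain ⟨g, h, hgh⟩ := hy2
        obtain ⟨t, ht⟩ := Stmt8Aux.key p hloc hcent g h
        refine ⟨t, ?_⟩
        rw [hgh] at ht
        rw [← inv_inv y, inv_pow, ht, inv_one]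
    set S₀ : Set G := {y | y ∈ l} with hS₀
    set H := Subgroup.closure S₀ with hH
    have hFG : H.FG := (Subgroup.fg_iff H).mpr ⟨S₀, hH.symm, l.finite_toSet⟩
    have hnil : Group.IsNilpotent ↥H := hloc H hFG
    obtain ⟨c, hc⟩ := Subgroup.nilpotent_iff_lowerCentralSeries.mp hnil
    have hxH : (q : G) ∈ Subgroup.closure S₀ := by
      rw [← hprod]
      exact Subgroup.list_prod_mem _ (fun y hy => Subgroup.subset_closure hy)
    have htor' : ∀ y ∈ ((Subtype.val : ↥H → G) ⁻¹' S₀), ∃ m : ℕ, y ^ p ^ m = 1 := by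
      intro y hy
      obtain ⟨m, hm⟩ := htorl (↑y) hy
      exact ⟨m, Subtype.ext (by simpa using hm)⟩
    have hgen : Subgroup.closure ((Subtype.val : ↥H → G) ⁻¹' S₀) = ⊤ :=
      Subgroup.closure_closure_coe_preimage
    obtain ⟨m, hm⟩ := Stmt8Aux.pt p c hc _ hgen htor' ⟨(q : G), hxH⟩
    exact ⟨m, Subtype.ext (by simpa using congrArg Subtype.val hm)⟩
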